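/- Let (a_{n,x}) be a family of complex numbers with limsup_{x→∞} x^{-1} ∑_{n<x} |a_{n,x}|² < ∞, and suppose that for every positive integer q the limit g(q) := lim_{x→∞} g_x(q) exists, where g_x(q) = ∑_{d|q} μ(q/d) · (d/x) ∑_{n<x/d} a_{dn,x}. Then the series ∑_{q=1}^∞ |g(q)|²/φ(q) converges, where φ is Euler's totient function. -/

import Mathlib

open Filter Finset

namespace SummableGAux

open ArithmeticFunction
open scoped ArithmeticFunction.Moebius

lemma moebius_sum_divisors (n : ℕ) :
    ∑ d ∈ n.divisors, (μ d : ℤ) = if n = 1 then 1 else 0 := by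
  have := congrArg (fun f : ArithmeticFunction ℤ => f n) moebius_mul_coe_zeta
  simp only [coe_mul_zeta_apply, one_apply] at this
  exact this

lemma sum_multiples {M : Type*} [AddCommMonoid M] (d : ℕ) (hd : 0 < d) (x : ℝ)
    (G : ℕ → M) :
    ∑ m ∈ (Finset.Ioo 0 ⌈x⌉₊).filter (d ∣ ·), G m
      = ∑ n ∈ Finset.Ioo 0 ⌈x / (d:ℝ)⌉₊, G (d * n) := by
  have hd' : (0:ℝ) < d := by exact_mod_cast hd
  refine Finset.sum_nbij' (fun m => m / d) (fun n => d * n) ?_ ?_ ?_ ?_ ?_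
  · intro m hm
    simp only [mem_filter, mem_Ioo] at hm
    obtain ⟨⟨h0, h1⟩, hdm⟩ := hm
    simp only [mem_Ioo]
    refine ⟨Nat.div_pos (Nat.le_of_dvd h0 hdm) hd, ?_⟩
    rw [Nat.lt_ceil] at h1 ⊢
    rw [lt_div_iff₀ hd']
    obtain ⟨k, rfl⟩ := hdm
    rw [Nat.mul_div_cancel_left _ hd]
    calc ((k:ℝ) * d) = ((d * k : ℕ) : ℝ) := by push_cast; ring
    _ < x := h1
  · intro n hn
    simp only [mem_Ioo] at hn
    simp only [mem_filter, mem_Ioo]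
    refine ⟨⟨Nat.mul_pos hd hn.1, ?_⟩, Dvd.intro n rfl⟩
    rw [Nat.lt_ceil] at hn ⊢
    rw [lt_div_iff₀ hd'] at hn
    push_cast
    calc ((d:ℝ) * n) = (n:ℝ) * d := by ring
    _ < x := hn.2
  · intro m hm
    simp only [mem_filter] at hm
    exact Nat.mul_div_cancel' hm.2
  · intro n _
    exact Nat.mul_div_cancel_left _ hd
  · intro m hm
    simp only [mem_filter] at hm
    rw [Nat.mul_div_cancel' hm.2]

def rc (q m : ℕ) : ℤ :=
  ∑ d ∈ q.divisors, if d ∣ m then (μ (q / d) : ℤ) * d else 0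

lemma rearr (q : ℕ) (x : ℝ) (F : ℕ → ℂ) :
    ∑ d ∈ q.divisors, (μ (q / d) : ℂ) * ((d:ℂ) * ∑ n ∈ Finset.Ioo 0 ⌈x / (d:ℝ)⌉₊, F (d * n))
      = ∑ m ∈ Finset.Ioo 0 ⌈x⌉₊, (rc q m : ℂ) * F m := by
  have step1 : ∀ m ∈ Finset.Ioo 0 ⌈x⌉₊, (rc q m : ℂ) * F m
      = ∑ d ∈ q.divisors, (if d ∣ m then (μ (q / d) : ℂ) * d * F m else 0) := by
    intro m _
    simp only [rc, Int.cast_sum, apply_ite (fun z : ℤ => (z : ℂ)), Int.cast_mul,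
      Int.cast_natCast, Int.cast_zero, Finset.sum_mul, ite_mul, zero_mul]
  rw [Finset.sum_congr rfl step1, Finset.sum_comm]
  refine Finset.sum_congr rfl fun d hd => ?_
  have hd0 : 0 < d := Nat.pos_of_mem_divisors hd
  rw [← Finset.sum_filter, sum_multiples d hd0 x (fun m => (μ (q / d) : ℂ) * d * F m)]
  simp [Finset.mul_sum, mul_assoc]

lemma inner_moebius (q t : ℕ) (hq : q ≠ 0) :
    ∑ d ∈ q.divisors, (if t ∣ d then (μ (q / d) : ℤ) else 0)
      = if t = q then 1 else 0 := by
  by_cases ht : t ∣ q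
  · have h1 : ∑ d ∈ q.divisors, (if t ∣ d then (μ (q / d) : ℤ) else 0)
        = ∑ d ∈ q.divisors, (if t ∣ q / d then (μ (q / (q / d)) : ℤ) else 0) := by
      exact (Nat.sum_div_divisors q (fun d => if t ∣ d then (μ (q / d) : ℤ) else 0)).symm
    rw [h1]
    have h2 : ∀ d ∈ q.divisors, (if t ∣ q / d then (μ (q / (q / d)) : ℤ) else 0)
        = (if d ∣ q / t then (μ d : ℤ) else 0) := by
      intro d hd
      obtain ⟨hdq, -⟩ := Nat.mem_divisors.mp hd
      rw [Nat.div_div_self hdq hq]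
      congr 1
      rw [Nat.dvd_div_iff_mul_dvd hdq, Nat.dvd_div_iff_mul_dvd ht, mul_comm]
    rw [Finset.sum_congr rfl h2, ← Finset.sum_filter,
      Nat.divisors_filter_dvd_of_dvd hq (Nat.div_dvd_of_dvd ht),
      moebius_sum_divisors]
    have hiff : q / t = 1 ↔ t = q := by
      constructor
      · intro h
        have := Nat.eq_mul_of_div_eq_right ht h
        omega
      · rintro rfl
        exact Nat.div_self (Nat.pos_of_ne_zero hq)
    simp [hiff]
  · have h0 : (if t = q then (1:ℤ) else 0) = 0 := if_neg (by rintro rfl; exact ht dvd_rfl)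
    rw [h0]
    refine Finset.sum_eq_zero fun d hd => ?_
    exact if_neg fun htd => ht (htd.trans (Nat.mem_divisors.mp hd).1)

lemma gcd_eq_sum (q d e : ℕ) (hq : q ≠ 0) (hd : d ∣ q) :
    ((Nat.gcd d e : ℤ)) = ∑ t ∈ q.divisors, (if t ∣ d ∧ t ∣ e then (Nat.totient t : ℤ) else 0) := by
  have hcond : ∀ t : ℕ, (t ∣ d ∧ t ∣ e) ↔ t ∣ Nat.gcd d e := fun t => (Nat.dvd_gcd_iff).symm
  simp only [hcond]
  rw [← Finset.sum_filter,
    Nat.divisors_filter_dvd_of_dvd hq ((Nat.gcd_dvd_left d e).trans hd)]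
  exact_mod_cast (Nat.sum_totient (Nat.gcd d e)).symm

lemma orth (q q' : ℕ) (hq : q ≠ 0) (hq' : q' ≠ 0) :
    ∑ d ∈ q.divisors, ∑ e ∈ q'.divisors, (μ (q / d) : ℤ) * (μ (q' / e) : ℤ) * (Nat.gcd d e : ℤ)
      = if q = q' then (Nat.totient q : ℤ) else 0 := by
  have step1 : ∀ d ∈ q.divisors, ∀ e ∈ q'.divisors,
      (μ (q / d) : ℤ) * (μ (q' / e) : ℤ) * (Nat.gcd d e : ℤ)
      = ∑ t ∈ q.divisors, (if t ∣ d then (μ (q / d) : ℤ) else 0)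
          * (if t ∣ e then (μ (q' / e) : ℤ) else 0) * (Nat.totient t : ℤ) := by
    intro d hd e he
    rw [gcd_eq_sum q d e hq (Nat.mem_divisors.mp hd).1, Finset.mul_sum]
    refine Finset.sum_congr rfl fun t _ => ?_
    by_cases h1 : t ∣ d <;> by_cases h2 : t ∣ e <;> simp [h1, h2]
  calc ∑ d ∈ q.divisors, ∑ e ∈ q'.divisors, (μ (q / d) : ℤ) * (μ (q' / e) : ℤ) * (Nat.gcd d e : ℤ)
      = ∑ d ∈ q.divisors, ∑ e ∈ q'.divisors, ∑ t ∈ q.divisors,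
        (if t ∣ d then (μ (q / d) : ℤ) else 0) * (if t ∣ e then (μ (q' / e) : ℤ) else 0)
          * (Nat.totient t : ℤ) := by
        exact Finset.sum_congr rfl fun d hd => Finset.sum_congr rfl fun e he => step1 d hd e he
    _ = ∑ d ∈ q.divisors, ∑ t ∈ q.divisors, ∑ e ∈ q'.divisors,
        (if t ∣ d then (μ (q / d) : ℤ) else 0) * (if t ∣ e then (μ (q' / e) : ℤ) else 0)
          * (Nat.totient t : ℤ) :=
        Finset.sum_congr rfl fun d _ => Finset.sum_comm
    _ = ∑ t ∈ q.divisors, ∑ d ∈ q.divisors, ∑ e ∈ q'.divisors,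
        (if t ∣ d then (μ (q / d) : ℤ) else 0) * (if t ∣ e then (μ (q' / e) : ℤ) else 0)
          * (Nat.totient t : ℤ) := Finset.sum_comm
    _ = ∑ t ∈ q.divisors, (∑ d ∈ q.divisors, (if t ∣ d then (μ (q / d) : ℤ) else 0))
          * (∑ e ∈ q'.divisors, (if t ∣ e then (μ (q' / e) : ℤ) else 0)) * (Nat.totient t : ℤ) := by
        refine Finset.sum_congr rfl fun t _ => ?_
        rw [Finset.sum_mul_sum, Finset.sum_mul]
        refine Finset.sum_congr rfl fun d _ => ?_
        rw [Finset.sum_mul]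
    _ = if q = q' then (Nat.totient q : ℤ) else 0 := by
        have hmem : q ∈ q.divisors := Nat.mem_divisors_self q hq
        by_cases hqq : q = q'
        · subst hqq
          rw [if_pos rfl]
          rw [Finset.sum_eq_single q]
          · simp [inner_moebius q q hq]
          · intro t ht htq
            rw [inner_moebius q t hq, if_neg htq]
            ring
          · intro h; exact absurd hmem h
        · rw [if_neg hqq]
          refine Finset.sum_eq_zero fun t ht => ?_
          rw [inner_moebius q t hq, inner_moebius q' t hq']
          by_cases h1 : t = q
          · subst h1
            rw [if_pos rfl, if_neg hqq]
            ring
          · rw [if_neg h1]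
            ring

lemma rc_mul_sum (q q' : ℕ) (x : ℝ) :
    (∑ m ∈ Finset.Ioo 0 ⌈x⌉₊, rc q m * rc q' m)
      = ∑ d ∈ q.divisors, ∑ e ∈ q'.divisors, ((μ (q / d) : ℤ) * d) * ((μ (q' / e) : ℤ) * e)
          * ((Finset.Ioo 0 ⌈x / (Nat.lcm d e : ℝ)⌉₊).card : ℤ) := by
  have expand : ∀ m, rc q m * rc q' m
      = ∑ d ∈ q.divisors, ∑ e ∈ q'.divisors,
          (if Nat.lcm d e ∣ m then ((μ (q / d) : ℤ) * d) * ((μ (q' / e) : ℤ) * e) else 0) := by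
    intro m
    rw [rc, rc, Finset.sum_mul_sum]
    refine Finset.sum_congr rfl fun d _ => Finset.sum_congr rfl fun e _ => ?_
    by_cases h1 : d ∣ m <;> by_cases h2 : e ∣ m <;>
      simp [h1, h2, Nat.lcm_dvd_iff]
  calc (∑ m ∈ Finset.Ioo 0 ⌈x⌉₊, rc q m * rc q' m)
      = ∑ d ∈ q.divisors, ∑ e ∈ q'.divisors, ∑ m ∈ Finset.Ioo 0 ⌈x⌉₊,
          (if Nat.lcm d e ∣ m then ((μ (q / d) : ℤ) * d) * ((μ (q' / e) : ℤ) * e) else 0) := by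
        rw [Finset.sum_congr rfl fun m _ => expand m, Finset.sum_comm]
        exact Finset.sum_congr rfl fun d _ => Finset.sum_comm
    _ = _ := by
        refine Finset.sum_congr rfl fun d hd => Finset.sum_congr rfl fun e he => ?_
        have hl : 0 < Nat.lcm d e :=
          Nat.pos_of_ne_zero (Nat.lcm_ne_zero (Nat.pos_of_mem_divisors hd).ne'
            (Nat.pos_of_mem_divisors he).ne')
        rw [← Finset.sum_filter, sum_multiples (Nat.lcm d e) hl x
          (fun _ => ((μ (q / d) : ℤ) * d) * ((μ (q' / e) : ℤ) * e)), Finset.sum_const,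
          nsmul_eq_mul, mul_comm]

lemma ceil_ratio_tendsto (l : ℕ) (hl : 0 < l) :
    Tendsto (fun x : ℝ => x⁻¹ * ((Finset.Ioo 0 ⌈x / (l:ℝ)⌉₊).card : ℝ)) atTop
      (nhds (1 / (l:ℝ))) := by
  have hl' : (0:ℝ) < l := by exact_mod_cast hl
  have hlow : Tendsto (fun x : ℝ => 1 / (l:ℝ) - x⁻¹) atTop (nhds (1 / (l:ℝ))) := by
    simpa using (tendsto_inv_atTop_zero (𝕜 := ℝ)).const_sub (1 / (l:ℝ))
  refine tendsto_of_tendsto_of_tendsto_of_le_of_le' hlow tendsto_const_nhds ?_ ?_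
  · filter_upwards [eventually_ge_atTop (1:ℝ)] with x hx
    have hx0 : (0:ℝ) < x := lt_of_lt_of_le one_pos hx
    have hpos : (0:ℝ) < x / l := div_pos hx0 hl'
    have hceil : (1:ℕ) ≤ ⌈x / (l:ℝ)⌉₊ := Nat.one_le_ceil_iff.mpr hpos
    rw [Nat.card_Ioo, Nat.sub_zero, Nat.cast_sub hceil, Nat.cast_one]
    have key : x⁻¹ * (x / l - 1) = 1 / l - x⁻¹ := by
      rw [mul_sub, mul_one, mul_div_assoc', inv_mul_cancel₀ hx0.ne']
    rw [← key]
    have h1 : x / l ≤ (⌈x / (l:ℝ)⌉₊ : ℝ) := Nat.le_ceil _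
    have hxinv : (0:ℝ) ≤ x⁻¹ := inv_nonneg.mpr hx0.le
    nlinarith
  · filter_upwards [eventually_ge_atTop (1:ℝ)] with x hx
    have hx0 : (0:ℝ) < x := lt_of_lt_of_le one_pos hx
    have hpos : (0:ℝ) < x / l := div_pos hx0 hl'
    have hceil : (1:ℕ) ≤ ⌈x / (l:ℝ)⌉₊ := Nat.one_le_ceil_iff.mpr hpos
    rw [Nat.card_Ioo, Nat.sub_zero, Nat.cast_sub hceil, Nat.cast_one]
    have h2 : (⌈x / (l:ℝ)⌉₊ : ℝ) < x / l + 1 := Nat.ceil_lt_add_one hpos.le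
    have key : x⁻¹ * (x / l) = 1 / l := by
      rw [mul_div_assoc', inv_mul_cancel₀ hx0.ne', one_div]
    rw [← key]
    have hxinv : (0:ℝ) ≤ x⁻¹ := inv_nonneg.mpr hx0.le
    nlinarith


lemma T_tendsto (q q' : ℕ) (hq : 0 < q) (hq' : 0 < q') :
    Tendsto (fun x : ℝ => x⁻¹ * ((∑ m ∈ Finset.Ioo 0 ⌈x⌉₊, rc q m * rc q' m : ℤ) : ℝ)) atTop
      (nhds (if q = q' then (Nat.totient q : ℝ) else 0)) := by
  have hfun : ∀ x : ℝ, x⁻¹ * ((∑ m ∈ Finset.Ioo 0 ⌈x⌉₊, rc q m * rc q' m : ℤ) : ℝ)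
      = ∑ d ∈ q.divisors, ∑ e ∈ q'.divisors,
          (((μ (q / d) : ℤ) * d * ((μ (q' / e) : ℤ) * e) : ℤ) : ℝ)
            * (x⁻¹ * ((Finset.Ioo 0 ⌈x / (Nat.lcm d e : ℝ)⌉₊).card : ℝ)) := by
    intro x
    rw [rc_mul_sum]
    push_cast
    rw [Finset.mul_sum]
    refine Finset.sum_congr rfl fun d _ => ?_
    rw [Finset.mul_sum]
    refine Finset.sum_congr rfl fun e _ => ?_
    ring
  have hterm : ∀ d ∈ q.divisors, ∀ e ∈ q'.divisors,
      (((μ (q / d) : ℤ) * d * ((μ (q' / e) : ℤ) * e) : ℤ) : ℝ) * (1 / (Nat.lcm d e : ℝ))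
      = (((μ (q / d) : ℤ) * (μ (q' / e) : ℤ) * (Nat.gcd d e : ℤ) : ℤ) : ℝ) := by
    intro d hd e he
    have h1 : Nat.gcd d e * Nat.lcm d e = d * e := Nat.gcd_mul_lcm d e
    have h2 : ((Nat.gcd d e : ℝ)) * (Nat.lcm d e : ℝ) = (d : ℝ) * e := by
      exact_mod_cast congrArg (fun n : ℕ => (n : ℝ)) h1
    have hl : (Nat.lcm d e : ℝ) ≠ 0 := by
      have := Nat.lcm_ne_zero (Nat.pos_of_mem_divisors hd).ne' (Nat.pos_of_mem_divisors he).ne'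
      exact_mod_cast this
    rw [mul_one_div, div_eq_iff hl]
    push_cast
    linear_combination (-(μ (q / d) : ℝ)) * ((μ (q' / e) : ℝ)) * h2
  have hval : ∑ d ∈ q.divisors, ∑ e ∈ q'.divisors,
      (((μ (q / d) : ℤ) * d * ((μ (q' / e) : ℤ) * e) : ℤ) : ℝ) * (1 / (Nat.lcm d e : ℝ))
      = if q = q' then (Nat.totient q : ℝ) else 0 := by
    rw [Finset.sum_congr rfl fun d hd => Finset.sum_congr rfl fun e he => hterm d hd e he]
    have := orth q q' hq.ne' hq'.ne'
    have hcast := congrArg (fun z : ℤ => (z : ℝ)) this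
    push_cast at hcast ⊢
    exact hcast
  rw [funext hfun, ← hval]
  refine tendsto_finset_sum _ fun d hd => tendsto_finset_sum _ fun e he => ?_
  have hl : 0 < Nat.lcm d e := Nat.pos_of_ne_zero
    (Nat.lcm_ne_zero (Nat.pos_of_mem_divisors hd).ne' (Nat.pos_of_mem_divisors he).ne')
  exact (ceil_ratio_tendsto (Nat.lcm d e) hl).const_mul _

private lemma core (a : ℕ → ℝ → ℂ) (g : ℕ → ℂ) (C : ℝ)
    (hC : ∀ᶠ x : ℝ in atTop, x⁻¹ * ∑ n ∈ Finset.Ioo 0 ⌈x⌉₊, ‖a n x‖ ^ 2 ≤ C)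
    (hg : ∀ q : ℕ, 0 < q → Tendsto
      (fun x : ℝ => ∑ d ∈ q.divisors, (μ (q / d) : ℂ) *
        ((d : ℂ) / (x : ℂ) * ∑ n ∈ Finset.Ioo 0 ⌈x / (d : ℝ)⌉₊, a (d * n) x))
      atTop (nhds (g q)))
    (N : ℕ) : ∑ q ∈ Finset.Icc 1 N, ‖g q‖ ^ 2 / (Nat.totient q : ℝ) ≤ C := by
  classical
  set Q : Finset ℕ := Finset.Icc 1 N with hQdef
  have hQpos : ∀ q ∈ Q, 0 < q := fun q hq => (Finset.mem_Icc.mp hq).1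
  set w : ℕ → ℂ := fun q => g q / (Nat.totient q : ℂ) with hw
  -- the weighted Ramanujan approximation
  set v : ℝ → ℕ → ℂ := fun x m => ∑ q ∈ Q, w q * (rc q m : ℂ) with hv
  set E : ℕ → ℝ → ℂ := fun q x => ∑ d ∈ q.divisors, (μ (q / d) : ℂ) *
        ((d : ℂ) / (x : ℂ) * ∑ n ∈ Finset.Ioo 0 ⌈x / (d : ℝ)⌉₊, a (d * n) x) with hE
  set T : ℕ → ℕ → ℝ → ℝ := fun q q' x =>
      x⁻¹ * ((∑ m ∈ Finset.Ioo 0 ⌈x⌉₊, rc q m * rc q' m : ℤ) : ℝ) with hT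
  set Φ : ℝ → ℝ := fun x => (-2) * (∑ q ∈ Q, (starRingEnd ℂ) (w q) * E q x).re
      + (∑ q ∈ Q, ∑ q' ∈ Q, w q * (starRingEnd ℂ) (w q') * ((T q q' x : ℝ) : ℂ)).re with hΦ
  -- norms
  have hnorm : ∀ z : ℂ, ‖z‖ ^ 2 = (z * (starRingEnd ℂ) z).re := by
    intro z
    rw [Complex.mul_conj, Complex.ofReal_re, Complex.sq_norm]
  have hexp : ∀ u z : ℂ, ‖u - z‖ ^ 2
      = ‖u‖ ^ 2 - 2 * (u * (starRingEnd ℂ) z).re + (z * (starRingEnd ℂ) z).re := by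
    intro u z
    have hco : ∀ y : ℂ, ‖y‖ ^ 2 = y.re ^ 2 + y.im ^ 2 := by
      intro y
      rw [hnorm]
      simp only [Complex.mul_re, Complex.conj_re, Complex.conj_im]
      ring
    simp only [hco, Complex.sub_re, Complex.sub_im, Complex.mul_re, Complex.mul_im,
      Complex.conj_re, Complex.conj_im]
    ring
  -- E in terms of rc
  have hEeq : ∀ (q : ℕ) (x : ℝ), E q x
      = (x : ℂ)⁻¹ * ∑ m ∈ Finset.Ioo 0 ⌈x⌉₊, (rc q m : ℂ) * a m x := by
    intro q x
    rw [hE, ← rearr q x (fun m => a m x), Finset.mul_sum]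
    refine Finset.sum_congr rfl fun d _ => ?_
    ring
  -- pointwise inequality
  have hptwise : ∀ x : ℝ, 0 < x → 0 ≤ (x⁻¹ * ∑ n ∈ Finset.Ioo 0 ⌈x⌉₊, ‖a n x‖ ^ 2) + Φ x := by
    intro x hx
    have hx0 : (x : ℂ) ≠ 0 := by exact_mod_cast hx.ne'
    -- cross term
    have hcross : ∑ m ∈ Finset.Ioo 0 ⌈x⌉₊, a m x * (starRingEnd ℂ) (v x m)
        = (x : ℂ) * ∑ q ∈ Q, (starRingEnd ℂ) (w q) * E q x := by
      have h1 : ∀ m, (starRingEnd ℂ) (v x m)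
          = ∑ q ∈ Q, (starRingEnd ℂ) (w q) * (rc q m : ℂ) := by
        intro m
        rw [hv]
        simp [map_sum, map_mul]
      calc ∑ m ∈ Finset.Ioo 0 ⌈x⌉₊, a m x * (starRingEnd ℂ) (v x m)
          = ∑ q ∈ Q, (starRingEnd ℂ) (w q) * ∑ m ∈ Finset.Ioo 0 ⌈x⌉₊, (rc q m : ℂ) * a m x := by
            simp only [h1, Finset.mul_sum]
            rw [Finset.sum_comm]
            refine Finset.sum_congr rfl fun q _ => Finset.sum_congr rfl fun m _ => by ring
        _ = ∑ q ∈ Q, (starRingEnd ℂ) (w q) * ((x:ℂ) * E q x) := by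
            refine Finset.sum_congr rfl fun q _ => ?_
            rw [hEeq q x, ← mul_assoc ((x:ℂ)) _ _, mul_inv_cancel₀ hx0, one_mul]
        _ = (x : ℂ) * ∑ q ∈ Q, (starRingEnd ℂ) (w q) * E q x := by
            rw [Finset.mul_sum]
            refine Finset.sum_congr rfl fun q _ => ?_
            ring
    -- quadratic term
    have hquad : ∑ m ∈ Finset.Ioo 0 ⌈x⌉₊, v x m * (starRingEnd ℂ) (v x m)
        = (x : ℂ) * ∑ q ∈ Q, ∑ q' ∈ Q, w q * (starRingEnd ℂ) (w q') * ((T q q' x : ℝ) : ℂ) := by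
      have h1 : ∀ m, v x m * (starRingEnd ℂ) (v x m)
          = ∑ q ∈ Q, ∑ q' ∈ Q, w q * (starRingEnd ℂ) (w q') * ((rc q m : ℂ) * (rc q' m : ℂ)) := by
        intro m
        rw [hv]
        simp only [map_sum, map_mul, Finset.sum_mul_sum]
        refine Finset.sum_congr rfl fun q _ => Finset.sum_congr rfl fun q' _ => ?_
        have : (starRingEnd ℂ) ((rc q' m : ℂ)) = (rc q' m : ℂ) := by
          simp
        rw [this]
        ring
      calc ∑ m ∈ Finset.Ioo 0 ⌈x⌉₊, v x m * (starRingEnd ℂ) (v x m)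
          = ∑ q ∈ Q, ∑ q' ∈ Q, w q * (starRingEnd ℂ) (w q')
              * ∑ m ∈ Finset.Ioo 0 ⌈x⌉₊, (rc q m : ℂ) * (rc q' m : ℂ) := by
            rw [Finset.sum_congr rfl fun m _ => h1 m]
            rw [Finset.sum_comm]
            refine Finset.sum_congr rfl fun q _ => ?_
            rw [Finset.sum_comm]
            refine Finset.sum_congr rfl fun q' _ => ?_
            rw [Finset.mul_sum]
        _ = _ := by
            rw [Finset.mul_sum]
            refine Finset.sum_congr rfl fun q _ => ?_
            rw [Finset.mul_sum]
            refine Finset.sum_congr rfl fun q' _ => ?_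
            have hTx : ((T q q' x : ℝ) : ℂ)
                = (x:ℂ)⁻¹ * ((∑ m ∈ Finset.Ioo 0 ⌈x⌉₊, rc q m * rc q' m : ℤ) : ℂ) := by
              rw [hT]
              push_cast
              ring
            have hS : ((∑ m ∈ Finset.Ioo 0 ⌈x⌉₊, rc q m * rc q' m : ℤ) : ℂ)
                = ∑ m ∈ Finset.Ioo 0 ⌈x⌉₊, (rc q m : ℂ) * (rc q' m : ℂ) := by
              push_cast
              rfl
            rw [hTx, hS]
            rw [show ∀ A B : ℂ, (x:ℂ) * (A * ((↑x)⁻¹ * B)) = ((x:ℂ) * (↑x)⁻¹) * (A * B) from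
              fun A B => by ring, mul_inv_cancel₀ hx0, one_mul]
    -- the sum of squares
    have hsq : 0 ≤ x⁻¹ * ∑ m ∈ Finset.Ioo 0 ⌈x⌉₊, ‖a m x - v x m‖ ^ 2 := by
      have : 0 ≤ ∑ m ∈ Finset.Ioo 0 ⌈x⌉₊, ‖a m x - v x m‖ ^ 2 :=
        Finset.sum_nonneg fun m _ => by positivity
      positivity
    have hmain : (x⁻¹ * ∑ n ∈ Finset.Ioo 0 ⌈x⌉₊, ‖a n x‖ ^ 2) + Φ x
        = x⁻¹ * ∑ m ∈ Finset.Ioo 0 ⌈x⌉₊, ‖a m x - v x m‖ ^ 2 := by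
      have hexpand : ∑ m ∈ Finset.Ioo 0 ⌈x⌉₊, ‖a m x - v x m‖ ^ 2
          = ∑ m ∈ Finset.Ioo 0 ⌈x⌉₊, ‖a m x‖ ^ 2
            - 2 * (∑ m ∈ Finset.Ioo 0 ⌈x⌉₊, a m x * (starRingEnd ℂ) (v x m)).re
            + (∑ m ∈ Finset.Ioo 0 ⌈x⌉₊, v x m * (starRingEnd ℂ) (v x m)).re := by
        rw [Finset.sum_congr rfl fun m _ => hexp (a m x) (v x m)]
        rw [Finset.sum_add_distrib, Finset.sum_sub_distrib, Complex.re_sum, Complex.re_sum,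
          Finset.mul_sum]
      rw [hexpand, hcross, hquad, hΦ]
      have hre1 : ((x:ℂ) * ∑ q ∈ Q, (starRingEnd ℂ) (w q) * E q x).re
          = x * (∑ q ∈ Q, (starRingEnd ℂ) (w q) * E q x).re := by
        rw [Complex.re_ofReal_mul]
      have hre2 : ((x:ℂ) * ∑ q ∈ Q, ∑ q' ∈ Q, w q * (starRingEnd ℂ) (w q') * ((T q q' x:ℝ):ℂ)).re
          = x * (∑ q ∈ Q, ∑ q' ∈ Q, w q * (starRingEnd ℂ) (w q') * ((T q q' x:ℝ):ℂ)).re := by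
        rw [Complex.re_ofReal_mul]
      rw [hre1, hre2]
      have hxne : x ≠ 0 := hx.ne'
      field_simp
      ring
    rw [hmain]
    exact hsq
  -- limit of Φ
  have hΦlim : Tendsto Φ atTop
      (nhds (-(∑ q ∈ Q, ‖g q‖ ^ 2 / (Nat.totient q : ℝ)))) := by
    have htotpos : ∀ q ∈ Q, (0:ℝ) < (Nat.totient q : ℝ) := by
      intro q hq
      exact_mod_cast Nat.totient_pos.mpr (hQpos q hq)
    -- first limit
    have hval1 : ∑ q ∈ Q, (starRingEnd ℂ) (w q) * g q
        = ((∑ q ∈ Q, ‖g q‖ ^ 2 / (Nat.totient q : ℝ) : ℝ) : ℂ) := by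
      rw [Complex.ofReal_sum]
      refine Finset.sum_congr rfl fun q hq => ?_
      rw [hw]
      simp only [map_div₀, Complex.conj_natCast]
      rw [div_mul_eq_mul_div, mul_comm, Complex.mul_conj, ← Complex.sq_norm, Complex.ofReal_div]
      push_cast
      rfl
    have ht1 : Tendsto (fun x : ℝ => ∑ q ∈ Q, (starRingEnd ℂ) (w q) * E q x) atTop
        (nhds (∑ q ∈ Q, (starRingEnd ℂ) (w q) * g q)) := by
      refine tendsto_finset_sum _ fun q hq => ?_
      exact (hg q (hQpos q hq)).const_mul _
    have hlim1 : Tendsto (fun x : ℝ => (∑ q ∈ Q, (starRingEnd ℂ) (w q) * E q x).re) atTop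
        (nhds (∑ q ∈ Q, ‖g q‖ ^ 2 / (Nat.totient q : ℝ))) := by
      have := (Complex.continuous_re.tendsto _).comp ht1
      rw [hval1, Complex.ofReal_re] at this
      exact this
    -- second limit
    have ht2 : Tendsto
        (fun x : ℝ => ∑ q ∈ Q, ∑ q' ∈ Q, w q * (starRingEnd ℂ) (w q') * ((T q q' x : ℝ) : ℂ))
        atTop (nhds (∑ q ∈ Q, ∑ q' ∈ Q, w q * (starRingEnd ℂ) (w q')
          * (((if q = q' then (Nat.totient q : ℝ) else 0) : ℝ) : ℂ))) := by
      refine tendsto_finset_sum _ fun q hq => tendsto_finset_sum _ fun q' hq' => ?_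
      have := (Complex.continuous_ofReal.tendsto _).comp
        (T_tendsto q q' (hQpos q hq) (hQpos q' hq'))
      exact this.const_mul _
    have hval2 : ∑ q ∈ Q, ∑ q' ∈ Q, w q * (starRingEnd ℂ) (w q')
          * (((if q = q' then (Nat.totient q : ℝ) else 0) : ℝ) : ℂ)
        = ((∑ q ∈ Q, ‖g q‖ ^ 2 / (Nat.totient q : ℝ) : ℝ) : ℂ) := by
      rw [Complex.ofReal_sum]
      refine Finset.sum_congr rfl fun q hq => ?_
      have hinner : ∀ q' ∈ Q, w q * (starRingEnd ℂ) (w q')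
            * (((if q = q' then (Nat.totient q : ℝ) else 0) : ℝ) : ℂ)
          = if q = q' then w q * (starRingEnd ℂ) (w q') * ((Nat.totient q : ℝ) : ℂ) else 0 := by
        intro q' _
        split_ifs with h <;> simp
      rw [Finset.sum_congr rfl hinner, Finset.sum_ite_eq Q q
        (fun q' => w q * (starRingEnd ℂ) (w q') * ((Nat.totient q : ℝ) : ℂ)), if_pos hq]
      rw [Complex.mul_conj, hw]
      rw [Complex.normSq_div, Complex.normSq_natCast, ← Complex.sq_norm]
      have hφ : (Nat.totient q : ℝ) ≠ 0 := (htotpos q hq).ne'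
      rw [show ((Complex.ofReal (‖g q‖ ^ 2 / ((Nat.totient q : ℝ) * (Nat.totient q : ℝ))))
          * ((Nat.totient q : ℝ) : ℂ)) = Complex.ofReal (‖g q‖ ^ 2
            / ((Nat.totient q : ℝ) * (Nat.totient q : ℝ)) * (Nat.totient q : ℝ)) from by
          push_cast; ring]
      congr 1
      field_simp
    have hlim2 : Tendsto (fun x : ℝ => (∑ q ∈ Q, ∑ q' ∈ Q, w q * (starRingEnd ℂ) (w q')
          * ((T q q' x : ℝ) : ℂ)).re) atTop
        (nhds (∑ q ∈ Q, ‖g q‖ ^ 2 / (Nat.totient q : ℝ))) := by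
      have := (Complex.continuous_re.tendsto _).comp ht2
      rw [hval2, Complex.ofReal_re] at this
      exact this
    have := (hlim1.const_mul (-2)).add hlim2
    rw [hΦ]
    convert this using 2 with x
    ring
  -- conclude
  have hneg : Tendsto (fun x => -Φ x) atTop
      (nhds (∑ q ∈ Q, ‖g q‖ ^ 2 / (Nat.totient q : ℝ))) := by
    simpa using hΦlim.neg
  refine le_of_tendsto hneg ?_
  filter_upwards [hC, eventually_gt_atTop (0:ℝ)] with x h1 h2
  have h3 := hptwise x h2
  have h4 : -Φ x ≤ x⁻¹ * ∑ n ∈ Finset.Ioo 0 ⌈x⌉₊, ‖a n x‖ ^ 2 := by linarith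
  exact h4.trans h1


end SummableGAux

theorem summable_g_sq_div_totient (a : ℕ → ℝ → ℂ) (g : ℕ → ℂ)
    (hbound : IsBoundedUnder (· ≤ ·) atTop
      (fun x : ℝ => x⁻¹ * ∑ n ∈ Finset.Ioo 0 ⌈x⌉₊, ‖a n x‖ ^ 2))
    (hg : ∀ q : ℕ, 0 < q → Tendsto
      (fun x : ℝ => ∑ d ∈ q.divisors, (ArithmeticFunction.moebius (q / d) : ℂ) *
        ((d : ℂ) / (x : ℂ) * ∑ n ∈ Finset.Ioo 0 ⌈x / (d : ℝ)⌉₊, a (d * n) x))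
      atTop (nhds (g q))) :
    Summable (fun q : ℕ => ‖g (q + 1)‖ ^ 2 / (Nat.totient (q + 1) : ℝ)) := by
  obtain ⟨C, hC⟩ := hbound
  rw [Filter.eventually_map] at hC
  refine summable_of_sum_range_le (c := C) (fun n => by positivity) fun N => ?_
  have h := SummableGAux.core a g C hC hg N
  calc ∑ i ∈ Finset.range N, ‖g (i + 1)‖ ^ 2 / (Nat.totient (i + 1) : ℝ)
      = ∑ q ∈ Finset.Icc 1 N, ‖g q‖ ^ 2 / (Nat.totient q : ℝ) := by
        rw [← Finset.Ico_add_one_right_eq_Icc, Finset.sum_Ico_eq_sum_range]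
        exact Finset.sum_congr rfl fun i _ => by rw [Nat.add_comm 1 i]
    _ ≤ C := h
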